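/- [Modified labels are suffix-distinguishable] For all positive integers l and L with l ≠ L, the modified label l* is not a suffix of the modified label L*. In particular, there exists an index i with 0 ≤ i < min(|l*|, |L*|) such that the (|l*| − i)-th bit of l* differs from the (|L*| − i)-th bit of L* (bits counted from the left, starting at 1). -/

import Mathlib

/-- The modified label `μ*` of a positive integer `μ`: its binary representation (most
significant bit first), followed by a single `1`, followed by `|μ|` zeros, where
`|μ| = ⌊log₂ μ⌋ + 1` is the length of the binary representation of `μ`.
(For `μ > 0`, `Nat.bits μ` is the binary representation of `μ`, least significant bit
first, of length `|μ|`.) Thus `μ*` has length `2|μ| + 1`. -/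
def modifiedLabel (μ : ℕ) : List Bool :=
  (Nat.bits μ).reverse ++ [true] ++ List.replicate (Nat.bits μ).length false

lemma aux_bits_inj : ∀ n : ℕ, ∀ m : ℕ, Nat.bits n = Nat.bits m → n = m := by
  intro n
  induction n using Nat.strong_induction_on with
  | _ n ih =>
    intro m h
    rcases Nat.eq_zero_or_pos n with hn | hn
    · subst hn
      rcases Nat.eq_zero_or_pos m with hm | hm
      · omega
      · exfalso
        have : (Nat.bits m).length = 0 := by rw [← h]; simp
        rw [Nat.size_eq_bits_len] at this
        have := Nat.size_eq_zero.mp this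
        omega
    · rcases Nat.eq_zero_or_pos m with hm | hm
      · exfalso
        subst hm
        have : (Nat.bits n).length = 0 := by rw [h]; simp
        rw [Nat.size_eq_bits_len] at this
        have := Nat.size_eq_zero.mp this
        omega
      · have hb : Nat.bodd n = Nat.bodd m := by
          rw [Nat.bodd_eq_bits_head, Nat.bodd_eq_bits_head, h]
        have ht : Nat.bits (Nat.div2 n) = Nat.bits (Nat.div2 m) := by
          rw [Nat.div2_bits_eq_tail, Nat.div2_bits_eq_tail, h]
        have hd : Nat.div2 n = Nat.div2 m :=
          ih _ (Nat.binaryRec_decreasing (by omega)) _ ht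
        calc n = Nat.bit (Nat.bodd n) (Nat.div2 n) := (Nat.bit_bodd_div2 n).symm
          _ = Nat.bit (Nat.bodd m) (Nat.div2 m) := by rw [hb, hd]
          _ = m := Nat.bit_bodd_div2 m

lemma modifiedLabel_reverse (μ : ℕ) :
    (modifiedLabel μ).reverse =
      List.replicate (Nat.bits μ).length false ++ true :: Nat.bits μ := by
  simp [modifiedLabel]

lemma modifiedLabel_length (μ : ℕ) :
    (modifiedLabel μ).length = 2 * (Nat.bits μ).length + 1 := by
  simp [modifiedLabel]; ring

lemma rev_getD_lt {μ i : ℕ} (h : i < (Nat.bits μ).length) :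
    (modifiedLabel μ).reverse.getD i false = false := by
  rw [modifiedLabel_reverse, List.getD_append _ _ _ _ (by simpa using h)]
  simp [List.getD_eq_getElem?_getD]

lemma rev_getD_sep (μ : ℕ) :
    (modifiedLabel μ).reverse.getD (Nat.bits μ).length false = true := by
  rw [modifiedLabel_reverse, List.getD_append_right _ _ _ _ (by simp)]
  simp

lemma rev_getD_bits (μ j : ℕ) :
    (modifiedLabel μ).reverse.getD ((Nat.bits μ).length + 1 + j) false
      = (Nat.bits μ).getD j false := by
  rw [modifiedLabel_reverse, List.getD_append_right _ _ _ _ (by simp; omega)]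
  have : (Nat.bits μ).length + 1 + j - (List.replicate (Nat.bits μ).length false).length
      = j + 1 := by simp; omega
  rw [this]
  rfl

lemma exists_ne_of_ne {a b : List Bool} (hlen : a.length = b.length) (h : a ≠ b) :
    ∃ i < a.length, a.getD i false ≠ b.getD i false := by
  by_contra hc
  push_neg at hc
  refine h (List.ext_getElem hlen fun i h1 h2 => ?_)
  have := hc i h1
  rwa [List.getD_eq_getElem _ _ h1, List.getD_eq_getElem _ _ h2] at this

lemma key (l L : ℕ) (hl : 0 < l) (hL : 0 < L) (hlL : l ≠ L) :
    ∃ i < min (modifiedLabel l).length (modifiedLabel L).length,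
      (modifiedLabel l).reverse.getD i false ≠ (modifiedLabel L).reverse.getD i false := by
  set n := (Nat.bits l).length with hn
  set m := (Nat.bits L).length with hm
  rcases lt_trichotomy n m with h | h | h
  · refine ⟨n, ?_, ?_⟩
    · rw [modifiedLabel_length, modifiedLabel_length, ← hn, ← hm]; omega
    · rw [rev_getD_sep, rev_getD_lt (by omega)]; simp
  · -- equal lengths: bits differ somewhere
    have hb : Nat.bits l ≠ Nat.bits L := fun hc => hlL (aux_bits_inj l L hc)
    have hlen : (Nat.bits l).length = (Nat.bits L).length := h
    obtain ⟨j, hj, hne⟩ := exists_ne_of_ne hlen hb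
    refine ⟨n + 1 + j, ?_, ?_⟩
    · rw [modifiedLabel_length, modifiedLabel_length, ← hn, ← hm]; omega
    · rw [show n + 1 + j = (Nat.bits l).length + 1 + j from by rw [hn], rev_getD_bits,
        show (Nat.bits l).length + 1 + j = (Nat.bits L).length + 1 + j from by rw [hlen],
        rev_getD_bits]
      exact hne
  · refine ⟨m, ?_, ?_⟩
    · rw [modifiedLabel_length, modifiedLabel_length, ← hn, ← hm]; omega
    · rw [rev_getD_sep, rev_getD_lt (by omega)]; simp

/-- **Modified labels are suffix-distinguishable.** For distinct positive integers `l` and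
`L`, the modified label `l*` is not a suffix of `L*`; in particular there is an index
`i` with `0 ≤ i < min |l*| |L*|` such that the `(|l*| - i)`-th bit of `l*` differs from
the `(|L*| - i)`-th bit of `L*` (bits counted from the left, starting at 1, i.e.
0-based positions `|l*| - i - 1` and `|L*| - i - 1`). -/
theorem modifiedLabel_not_suffix
    (l L : ℕ) (hl : 0 < l) (hL : 0 < L) (hlL : l ≠ L) :
    ¬ (modifiedLabel l <:+ modifiedLabel L) ∧
    ∃ i : ℕ, i < min (modifiedLabel l).length (modifiedLabel L).length ∧
      (modifiedLabel l).getD ((modifiedLabel l).length - 1 - i) false ≠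
        (modifiedLabel L).getD ((modifiedLabel L).length - 1 - i) false := by
  obtain ⟨i, hi, hne⟩ := key l L hl hL hlL
  have hil : i < (modifiedLabel l).length := lt_of_lt_of_le hi (min_le_left _ _)
  have hiL : i < (modifiedLabel L).length := lt_of_lt_of_le hi (min_le_right _ _)
  have conv : ∀ (a : List Bool), ∀ j < a.length,
      a.getD (a.length - 1 - j) false = a.reverse.getD j false := by
    intro a j hj
    rw [List.getD_eq_getElem _ _ (by omega), List.getD_eq_getElem _ _ (by simpa using hj),
      List.getElem_reverse]
  constructor
  · rintro ⟨x, hx⟩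
    have hrev : (modifiedLabel L).reverse = (modifiedLabel l).reverse ++ x.reverse := by
      rw [← hx]; simp
    have : (modifiedLabel L).reverse.getD i false = (modifiedLabel l).reverse.getD i false := by
      rw [hrev, List.getD_append _ _ _ _ (by simpa using hil)]
    exact hne this.symm
  · exact ⟨i, hi, by rw [conv _ _ hil, conv _ _ hiL]; exact hne⟩
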